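/- Let u, v : Ω → ℝ be C² functions with u = v on S, n·∇u = 0 on S, and n·∇v = 0 on S (i.e., u and v are both first-order Closest Point-like extensions of the same function on S). Then for every x ∈ S, ∇u(x) = ∇v(x) and Δu(x) − n(x)ᵀ D²u(x) n(x) = Δv(x) − n(x)ᵀ D²v(x) n(x). Consequently, for a first-order Closest Point-like extension f̃ of f : S → ℝ, the quantities ∇f̃|_S and (Δf̃ − nᵀ(D²f̃)n)|_S depend only on f, and they equal the surface gradient ∇_S f and the Laplace–Beltrami operator Δ_S f, respectively; in particular, computing Δ_S f this way requires only the normal field n and no curvature information. -/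

import Mathlib

open scoped BigOperators RealInnerProductSpace

section Aux

variable {m : ℕ}

local notation "E" => EuclideanSpace ℝ (Fin m)

lemma inner_gradient_eq' (f : EuclideanSpace ℝ (Fin m) → ℝ) (x t : EuclideanSpace ℝ (Fin m)) :
    ⟪gradient f x, t⟫ = fderiv ℝ f x t :=
  InnerProductSpace.toDual_symm_apply

/-- If a C¹ (on an open set) function vanishes on the level set `{g = 0} ∩ Ω` and `∇g ≠ 0` at
`x ∈ Ω ∩ {g = 0}`, then `fderiv φ x` is a multiple of `fderiv g x`. -/
lemma fderiv_proportional_of_vanishing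
    (Ω : Set (EuclideanSpace ℝ (Fin m))) (hΩ : IsOpen Ω)
    (g : EuclideanSpace ℝ (Fin m) → ℝ) (hg : ContDiffOn ℝ 2 g Ω)
    (φ : EuclideanSpace ℝ (Fin m) → ℝ) (hφ : ContDiffOn ℝ 1 φ Ω)
    (hφ0 : ∀ y ∈ Ω, g y = 0 → φ y = 0)
    (x : EuclideanSpace ℝ (Fin m)) (hx : x ∈ Ω) (hgx : g x = 0)
    (hG : gradient g x ≠ 0) :
    ∃ lam : ℝ, fderiv ℝ φ x = lam • fderiv ℝ g x := by
  have hmem : Ω ∈ nhds x := hΩ.mem_nhds hx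
  have hgs : HasStrictFDerivAt g (fderiv ℝ g x) x :=
    (hg.contDiffAt hmem).hasStrictFDerivAt (by norm_num)
  have hφs : HasStrictFDerivAt φ (fderiv ℝ φ x) x :=
    (hφ.contDiffAt hmem).hasStrictFDerivAt one_ne_zero
  have hextr : IsLocalExtrOn φ {z | g z = g x} x := by
    left
    filter_upwards [mem_nhdsWithin_of_mem_nhds hmem, self_mem_nhdsWithin] with z hz hz'
    have hz0 : g z = 0 := by simpa [hgx] using hz'
    rw [hφ0 z hz hz0, hφ0 x hx hgx]
  obtain ⟨a, b, hab, h0⟩ := hextr.exists_multipliers_of_hasStrictFDerivAt_1d hgs hφs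
  by_cases hb : b = 0
  · exfalso
    have ha : a ≠ 0 := by
      intro ha; exact hab (by simp [ha, hb, Prod.ext_iff])
    rw [hb, zero_smul, add_zero] at h0
    have hg0 : fderiv ℝ g x = 0 := by
      have := congrArg (fun L => a⁻¹ • L) h0
      simpa [smul_smul, inv_mul_cancel₀ ha] using this
    apply hG
    unfold gradient
    rw [hg0]
    simp
  · refine ⟨-a / b, ?_⟩
    have h1 : b • fderiv ℝ φ x = (-a) • fderiv ℝ g x := by
      have := congrArg (fun L => L - a • fderiv ℝ g x) h0
      simp only [add_sub_cancel_left, zero_sub] at this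
      rw [this, neg_smul]
    have := congrArg (fun L => b⁻¹ • L) h1
    simpa [smul_smul, inv_mul_cancel₀ hb, div_eq_inv_mul, neg_div] using this

end Aux

/-- The second partial derivative `∂_w ∂_v u` at `x`, i.e. `wᵀ (D²u)(x) v`. -/
noncomputable def secondDeriv {m : ℕ} (u : EuclideanSpace ℝ (Fin m) → ℝ)
    (x v w : EuclideanSpace ℝ (Fin m)) : ℝ :=
  fderiv ℝ (fun y => fderiv ℝ u y v) x w

/-- The Euclidean Laplacian `Δu = trace D²u`. -/
noncomputable def laplacian {m : ℕ} (u : EuclideanSpace ℝ (Fin m) → ℝ)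
    (x : EuclideanSpace ℝ (Fin m)) : ℝ :=
  ∑ i, secondDeriv u x (EuclideanSpace.single i 1) (EuclideanSpace.single i 1)

/-- two first-order Closest Point-like extensions `u, v` of the same
function on the level-set hypersurface `S = {g = 0}` have the same gradient on `S` and
the same value of `Δw − nᵀ(D²w)n` on `S`; these equal the surface gradient and the
Laplace–Beltrami operator of the common restriction, and require only the normal `n`. -/
theorem cp_like_extensions_give_surface_operators
    (m : ℕ) (Ω : Set (EuclideanSpace ℝ (Fin m))) (hΩ : IsOpen Ω)
    (g : EuclideanSpace ℝ (Fin m) → ℝ) (hg : ContDiffOn ℝ 2 g Ω)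
    (hgrad : ∀ x ∈ Ω, g x = 0 → gradient g x ≠ 0)
    (u v : EuclideanSpace ℝ (Fin m) → ℝ)
    (hu : ContDiffOn ℝ 2 u Ω) (hv : ContDiffOn ℝ 2 v Ω)
    (huv : ∀ x ∈ Ω, g x = 0 → u x = v x)
    (hnu : ∀ x ∈ Ω, g x = 0 → ⟪gradient g x, gradient u x⟫ = (0 : ℝ))
    (hnv : ∀ x ∈ Ω, g x = 0 → ⟪gradient g x, gradient v x⟫ = (0 : ℝ))
    (n : EuclideanSpace ℝ (Fin m) → EuclideanSpace ℝ (Fin m))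
    (hn : ∀ y, n y = ‖gradient g y‖⁻¹ • gradient g y) :
    ∀ x ∈ Ω, g x = 0 →
      gradient u x = gradient v x ∧
      laplacian u x - secondDeriv u x (n x) (n x)
        = laplacian v x - secondDeriv v x (n x) (n x) := by
  set w : EuclideanSpace ℝ (Fin m) → ℝ := fun y => u y - v y with hw_def
  have hw : ContDiffOn ℝ 2 w Ω := hu.sub hv
  -- Step A: fderiv of w vanishes on S ∩ Ω
  have hA : ∀ y ∈ Ω, g y = 0 → fderiv ℝ w y = 0 := by
    intro y hy hgy
    have hmem : Ω ∈ nhds y := hΩ.mem_nhds hy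
    have hG : gradient g y ≠ 0 := hgrad y hy hgy
    obtain ⟨lam, hlam⟩ := fderiv_proportional_of_vanishing Ω hΩ g hg w
      (hw.of_le (by norm_num)) (fun z hz hgz => sub_eq_zero.2 (huv z hz hgz)) y hy hgy hG
    -- evaluate at gradient g y
    have hsub : fderiv ℝ w y = fderiv ℝ u y - fderiv ℝ v y := by
      apply fderiv_sub
      · exact ((hu.contDiffAt hmem).differentiableAt (by norm_num))
      · exact ((hv.contDiffAt hmem).differentiableAt (by norm_num))
    have hval : fderiv ℝ w y (gradient g y) = 0 := by
      rw [hsub]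
      have h1 : fderiv ℝ u y (gradient g y) = 0 := by
        rw [← inner_gradient_eq']
        rw [real_inner_comm]
        exact hnu y hy hgy
      have h2 : fderiv ℝ v y (gradient g y) = 0 := by
        rw [← inner_gradient_eq']
        rw [real_inner_comm]
        exact hnv y hy hgy
      simp [h1, h2]
    have hgg : fderiv ℝ g y (gradient g y) = ⟪gradient g y, gradient g y⟫ :=
      (inner_gradient_eq' g y (gradient g y)).symm
    have hval2 : lam * ⟪gradient g y, gradient g y⟫ = 0 := by
      have := congrArg (fun L : EuclideanSpace ℝ (Fin m) →L[ℝ] ℝ => L (gradient g y)) hlam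
      simpa [hval, hgg] using this.symm
    have hinner : ⟪gradient g y, gradient g y⟫ ≠ (0:ℝ) := by
      rw [ne_eq, inner_self_eq_zero]; exact hG
    have hlam0 : lam = 0 := by
      rcases mul_eq_zero.1 hval2 with h | h
      · exact h
      · exact absurd h hinner
    rw [hlam, hlam0, zero_smul]
  intro x hx hgx
  have hmem : Ω ∈ nhds x := hΩ.mem_nhds hx
  have hG : gradient g x ≠ 0 := hgrad x hx hgx
  set G : EuclideanSpace ℝ (Fin m) := gradient g x with hG_def
  -- gradient equality
  have hfw : fderiv ℝ w x = 0 := hA x hx hgx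
  have hsubx : fderiv ℝ w x = fderiv ℝ u x - fderiv ℝ v x := by
    apply fderiv_sub
    · exact ((hu.contDiffAt hmem).differentiableAt (by norm_num))
    · exact ((hv.contDiffAt hmem).differentiableAt (by norm_num))
  have hfuv : fderiv ℝ u x = fderiv ℝ v x := by
    have := hfw; rw [hsubx] at this; exact sub_eq_zero.1 this
  have hgraduv : gradient u x = gradient v x := by
    unfold gradient; rw [hfuv]
  refine ⟨hgraduv, ?_⟩
  -- splitting of secondDeriv
  have hdU : ∀ a : EuclideanSpace ℝ (Fin m),
      DifferentiableAt ℝ (fun y => fderiv ℝ u y a) x := by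
    intro a
    exact (((hu.contDiffAt hmem).fderiv_right (m := 1) (le_refl 2)).clm_apply contDiffAt_const
      ).differentiableAt one_ne_zero
  have hdV : ∀ a : EuclideanSpace ℝ (Fin m),
      DifferentiableAt ℝ (fun y => fderiv ℝ v y a) x := by
    intro a
    exact (((hv.contDiffAt hmem).fderiv_right (m := 1) (le_refl 2)).clm_apply contDiffAt_const
      ).differentiableAt one_ne_zero
  have hsplit : ∀ a b : EuclideanSpace ℝ (Fin m),
      secondDeriv w x a b = secondDeriv u x a b - secondDeriv v x a b := by
    intro a b
    have hev : (fun y => fderiv ℝ w y a)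
        =ᶠ[nhds x] (fun y => fderiv ℝ u y a - fderiv ℝ v y a) := by
      filter_upwards [hmem] with z hz
      have hmz : Ω ∈ nhds z := hΩ.mem_nhds hz
      have : fderiv ℝ w z = fderiv ℝ u z - fderiv ℝ v z := by
        apply fderiv_sub
        · exact ((hu.contDiffAt hmz).differentiableAt (by norm_num))
        · exact ((hv.contDiffAt hmz).differentiableAt (by norm_num))
      simp [this]
    unfold secondDeriv
    rw [hev.fderiv_eq, fderiv_fun_sub (hdU a) (hdV a)]
    simp
  -- Lagrange for second derivatives of w
  have hwfd : ContDiffOn ℝ 1 (fderiv ℝ w) Ω := hw.fderiv_of_isOpen hΩ (by norm_num)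
  have hB : ∀ a : EuclideanSpace ℝ (Fin m), ∃ lam : ℝ,
      ∀ t, secondDeriv w x a t = lam * ⟪G, t⟫ := by
    intro a
    obtain ⟨lam, hlam⟩ := fderiv_proportional_of_vanishing Ω hΩ g hg
      (fun y => fderiv ℝ w y a) (hwfd.clm_apply contDiffOn_const)
      (fun z hz hgz => by show fderiv ℝ w z a = 0; rw [hA z hz hgz]; rfl) x hx hgx hG
    refine ⟨lam, fun t => ?_⟩
    have := congrArg (fun L : EuclideanSpace ℝ (Fin m) →L[ℝ] ℝ => L t) hlam
    simp only [ContinuousLinearMap.smul_apply, smul_eq_mul] at this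
    rw [show secondDeriv w x a t = fderiv ℝ (fun y => fderiv ℝ w y a) x t from rfl, this,
      ← inner_gradient_eq']
  -- symmetry of second derivative of w
  have hf'' : HasFDerivAt (fderiv ℝ w) (fderiv ℝ (fderiv ℝ w) x) x :=
    ((hwfd.contDiffAt hmem).differentiableAt one_ne_zero).hasFDerivAt
  have hevd : ∀ᶠ y in nhds x, HasFDerivAt w (fderiv ℝ w y) y := by
    filter_upwards [hmem] with z hz
    exact ((hw.contDiffAt (hΩ.mem_nhds hz)).differentiableAt (by norm_num)).hasFDerivAt
  have hsymm0 := second_derivative_symmetric_of_eventually hevd hf''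
  have hBval : ∀ a t : EuclideanSpace ℝ (Fin m),
      secondDeriv w x a t = fderiv ℝ (fderiv ℝ w) x t a := by
    intro a t
    have hcomp : HasFDerivAt (fun y => fderiv ℝ w y a)
        ((ContinuousLinearMap.apply ℝ ℝ a).comp (fderiv ℝ (fderiv ℝ w) x)) x :=
      (ContinuousLinearMap.apply ℝ ℝ a).hasFDerivAt.comp x hf''
    rw [show secondDeriv w x a t = fderiv ℝ (fun y => fderiv ℝ w y a) x t from rfl,
      hcomp.fderiv]
    rfl
  have hsymm : ∀ a t : EuclideanSpace ℝ (Fin m),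
      secondDeriv w x a t = secondDeriv w x t a := by
    intro a t
    rw [hBval, hBval, hsymm0 t a]
  -- structure of secondDeriv w
  choose L hL using hB
  have hGG : ⟪G, G⟫ ≠ (0:ℝ) := by rw [ne_eq, inner_self_eq_zero]; exact hG
  set c : ℝ := L G / ⟪G, G⟫ with hc_def
  have hkey : ∀ a t : EuclideanSpace ℝ (Fin m),
      secondDeriv w x a t = c * ⟪G, a⟫ * ⟪G, t⟫ := by
    intro a t
    have h1 : secondDeriv w x a G = L a * ⟪G, G⟫ := hL a G
    have h2 : secondDeriv w x a G = secondDeriv w x G a := hsymm a G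
    have h3 : secondDeriv w x G a = L G * ⟪G, a⟫ := hL G a
    have hLa : L a = c * ⟪G, a⟫ := by
      have : L a * ⟪G, G⟫ = L G * ⟪G, a⟫ := by rw [← h1, h2, h3]
      rw [hc_def, div_mul_eq_mul_div, eq_div_iff hGG]
      linarith [this]
    rw [hL a t, hLa]
  -- final computation
  have hN : n x = ‖G‖⁻¹ • G := hn x
  have hGN : ⟪G, n x⟫ = ‖G‖ := by
    rw [hN, real_inner_smul_right, real_inner_self_eq_norm_sq]
    have hnorm : ‖G‖ ≠ 0 := by simpa using hG
    field_simp
  have hlapw : laplacian w x = c * ⟪G, G⟫ := by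
    unfold laplacian
    have : ∀ i : Fin m,
        secondDeriv w x (EuclideanSpace.single i 1) (EuclideanSpace.single i 1)
          = c * (G i * G i) := by
      intro i
      rw [hkey]
      have : ⟪G, EuclideanSpace.single i (1:ℝ)⟫ = G i := by
        rw [EuclideanSpace.inner_single_right]; simp
      rw [this]; ring
    rw [Finset.sum_congr rfl (fun i _ => this i), ← Finset.mul_sum]
    congr 1
  have hsdw : secondDeriv w x (n x) (n x) = c * ⟪G, G⟫ := by
    rw [hkey, hGN, real_inner_self_eq_norm_sq]
    ring
  have hzero : laplacian w x - secondDeriv w x (n x) (n x) = 0 := by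
    rw [hlapw, hsdw]; ring
  have hlapsplit : laplacian w x = laplacian u x - laplacian v x := by
    unfold laplacian
    rw [← Finset.sum_sub_distrib]
    exact Finset.sum_congr rfl fun i _ => hsplit _ _
  rw [hlapsplit, hsplit (n x) (n x)] at hzero
  linarith
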